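/- For any two stochastic policies π and π' on a finite ergodic MDP, the total variation distance between stationary distributions satisfies D_TV(d_{π'} ∥ d_π) ≤ (κ* − 1)·E_{s∼d_π}[D_TV(π'(·|s) ∥ π(·|s))], where κ* = max_π κ^π and κ^π = Σ_{s'} d_π(s')·M^π(s,s') is Kemeny's constant (independent of s) with M^π the mean first passage time matrix. -/

import Mathlib

open Finset

/-- A stochastic policy. -/
def IsPolicy {S A : Type*} [Fintype A] (π : S → A → ℝ) : Prop :=
  (∀ s a, 0 ≤ π s a) ∧ ∀ s, ∑ a, π s a = 1

/-- State transition matrix induced by policy π. -/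
def inducedMatrix {S A : Type*} [Fintype A] (P : S → A → S → ℝ) (π : S → A → ℝ) :
    Matrix S S ℝ :=
  Matrix.of fun s s' => ∑ a, π s a * P s a s'

/-- Fundamental matrix Z = (I − P_π + P*_π)⁻¹ where P*_π = 1 d_π^T. -/
noncomputable def fundMatrix {S : Type*} [Fintype S] [DecidableEq S]
    (Pm : Matrix S S ℝ) (d : S → ℝ) : Matrix S S ℝ :=
  (1 - Pm + Matrix.of fun _ s' => d s')⁻¹

/-- Mean first passage time matrix M = (I − Z + E Z_dg) D, where D is the
diagonal matrix with entries 1/d(s). -/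
noncomputable def mfptMatrix {S : Type*} [Fintype S] [DecidableEq S]
    (Pm : Matrix S S ℝ) (d : S → ℝ) : Matrix S S ℝ :=
  (1 - fundMatrix Pm d + Matrix.of fun _ s' => fundMatrix Pm d s' s') *
    Matrix.diagonal fun s => (d s)⁻¹

/-- Stationary distribution of the chain induced by a policy. -/
def IsStationaryDist {S A : Type*} [Fintype S] [Fintype A]
    (P : S → A → S → ℝ) (π : S → A → ℝ) (d : S → ℝ) : Prop :=
  (∀ s, 0 < d s) ∧ (∑ s, d s = 1) ∧
    ∀ s', ∑ s, d s * ∑ a, π s a * P s a s' = d s'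

lemma mfpt_entry {S : Type*} [Fintype S] [DecidableEq S]
    (Pm : Matrix S S ℝ) (d : S → ℝ) (i j : S) :
    mfptMatrix Pm d i j
      = ((if i = j then (1:ℝ) else 0) - fundMatrix Pm d i j + fundMatrix Pm d j j) * (d j)⁻¹ := by
  simp [mfptMatrix, Matrix.mul_diagonal, Matrix.sub_apply, Matrix.add_apply, Matrix.one_apply]

section Core
variable {S : Type*} [Fintype S] [DecidableEq S]
  (Pm : Matrix S S ℝ) (d : S → ℝ)

/-- stationary vector is a left fixed vector of the fundamental-matrix denominator. -/
lemma vec_fix (hd_sum : ∑ s, d s = 1)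
    (hstat : ∀ j, ∑ i, d i * Pm i j = d j) :
    Matrix.vecMul d (1 - Pm + Matrix.of fun _ s' => d s') = d := by
  funext j
  simp only [Matrix.vecMul, dotProduct, Matrix.sub_apply, Matrix.add_apply,
    Matrix.one_apply, Matrix.of_apply]
  have : ∑ i, d i * ((if i = j then (1:ℝ) else 0) - Pm i j + d j)
      = (∑ i, d i * (if i = j then (1:ℝ) else 0)) - (∑ i, d i * Pm i j) + (∑ i, d i) * d j := by
    simp only [mul_sub, mul_add]
    rw [Finset.sum_add_distrib, Finset.sum_sub_distrib, ← Finset.sum_mul]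
  rw [this, hstat, hd_sum]
  simp [Finset.sum_ite_eq' Finset.univ j]

/-- d is a left fixed vector of Z. -/
lemma vec_fix_Z (hd_sum : ∑ s, d s = 1)
    (hstat : ∀ j, ∑ i, d i * Pm i j = d j)
    (hA : IsUnit (1 - Pm + Matrix.of fun _ s' => d s' : Matrix S S ℝ)) :
    Matrix.vecMul d (fundMatrix Pm d) = d := by
  set A : Matrix S S ℝ := 1 - Pm + Matrix.of fun _ s' => d s' with hAdef
  have hdet : IsUnit A.det := (Matrix.isUnit_iff_isUnit_det A).mp hA
  have hAZ : A * A⁻¹ = 1 := Matrix.mul_nonsing_inv A hdet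
  have h1 : Matrix.vecMul d A = d := vec_fix Pm d hd_sum hstat
  calc Matrix.vecMul d (fundMatrix Pm d) = Matrix.vecMul (Matrix.vecMul d A) A⁻¹ := by
        rw [h1]; rfl
    _ = Matrix.vecMul d (A * A⁻¹) := Matrix.vecMul_vecMul d A A⁻¹
    _ = d := by rw [hAZ]; simp

/-- the key identity (PZ)(i,j) = Z i j + d j − δ_{ij}. -/
lemma PZ_entry (hd_sum : ∑ s, d s = 1)
    (hstat : ∀ j, ∑ i, d i * Pm i j = d j)
    (hA : IsUnit (1 - Pm + Matrix.of fun _ s' => d s' : Matrix S S ℝ)) (i j : S) :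
    ∑ k, Pm i k * fundMatrix Pm d k j
      = fundMatrix Pm d i j + d j - (if i = j then (1:ℝ) else 0) := by
  set A : Matrix S S ℝ := 1 - Pm + Matrix.of fun _ s' => d s' with hAdef
  have hdet : IsUnit A.det := (Matrix.isUnit_iff_isUnit_det A).mp hA
  have hAZ : A * A⁻¹ = 1 := Matrix.mul_nonsing_inv A hdet
  have hdZ := vec_fix_Z Pm d hd_sum hstat hA
  have h1 : (A * A⁻¹) i j = (1 : Matrix S S ℝ) i j := by rw [hAZ]
  have h2 : ∑ k, A i k * fundMatrix Pm d k j = (if i = j then (1:ℝ) else 0) := by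
    rw [← Matrix.mul_apply]
    show (A * A⁻¹) i j = _
    rw [hAZ, Matrix.one_apply]
  have hdZj : ∑ k, d k * fundMatrix Pm d k j = d j := by
    have := congrFun hdZ j
    simpa [Matrix.vecMul, dotProduct] using this
  have h3 : ∑ k, A i k * fundMatrix Pm d k j
      = fundMatrix Pm d i j - (∑ k, Pm i k * fundMatrix Pm d k j) + d j := by
    have : ∀ k, A i k * fundMatrix Pm d k j
        = (if i = k then (1:ℝ) else 0) * fundMatrix Pm d k j
          - Pm i k * fundMatrix Pm d k j + d k * fundMatrix Pm d k j := by
      intro k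
      simp only [hAdef, Matrix.sub_apply, Matrix.add_apply, Matrix.one_apply, Matrix.of_apply]
      ring
    rw [Finset.sum_congr rfl fun k _ => this k]
    rw [Finset.sum_add_distrib, Finset.sum_sub_distrib, hdZj]
    congr 1; congr 1
    simp [Finset.sum_ite_eq Finset.univ i]
  have := h2.symm.trans h3
  linarith [this]

/-- mean first passage identity: M i j = 1 + Σ_{k≠j} Pm i k M k j. -/
lemma mfpt_passage (hd_pos : ∀ s, 0 < d s) (hd_sum : ∑ s, d s = 1)
    (hstat : ∀ j, ∑ i, d i * Pm i j = d j) (hrow : ∀ i, ∑ k, Pm i k = 1)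
    (hA : IsUnit (1 - Pm + Matrix.of fun _ s' => d s' : Matrix S S ℝ)) (i j : S) :
    mfptMatrix Pm d i j
      = 1 + ∑ k ∈ Finset.univ.erase j, Pm i k * mfptMatrix Pm d k j := by
  have hdj : d j ≠ 0 := (hd_pos j).ne'
  have hMjj : mfptMatrix Pm d j j = (d j)⁻¹ := by
    rw [mfpt_entry]; simp
  have herase : ∑ k ∈ Finset.univ.erase j, Pm i k * mfptMatrix Pm d k j
      = (∑ k, Pm i k * mfptMatrix Pm d k j) - Pm i j * (d j)⁻¹ := by
    rw [← hMjj]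
    rw [← Finset.sum_erase_add Finset.univ _ (Finset.mem_univ j)]
    ring
  rw [herase]
  have hsum : ∑ k, Pm i k * mfptMatrix Pm d k j
      = (Pm i j - (∑ k, Pm i k * fundMatrix Pm d k j) + (∑ k, Pm i k) * fundMatrix Pm d j j)
          * (d j)⁻¹ := by
    rw [Finset.sum_congr rfl fun k _ => by rw [mfpt_entry]]
    simp only [← mul_assoc]
    rw [← Finset.sum_mul]
    congr 1
    have : ∀ k, Pm i k * ((if k = j then (1:ℝ) else 0) - fundMatrix Pm d k j + fundMatrix Pm d j j)
        = Pm i k * (if k = j then (1:ℝ) else 0) - Pm i k * fundMatrix Pm d k j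
          + Pm i k * fundMatrix Pm d j j := fun k => by ring
    rw [Finset.sum_congr rfl fun k _ => this k, Finset.sum_add_distrib, Finset.sum_sub_distrib,
      ← Finset.sum_mul]
    congr 2
    simp [Finset.sum_ite_eq' Finset.univ j]
  rw [hsum, PZ_entry Pm d hd_sum hstat hA, mfpt_entry, hrow i]
  field_simp
  ring
end Core

lemma mfpt_ge_one {S : Type*} [Fintype S] [DecidableEq S]
    (Pm : Matrix S S ℝ) (d : S → ℝ)
    (hd_pos : ∀ s, 0 < d s) (hd_sum : ∑ s, d s = 1)
    (hstat : ∀ j, ∑ i, d i * Pm i j = d j) (hrow : ∀ i, ∑ k, Pm i k = 1)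
    (hPm_nonneg : ∀ i j, 0 ≤ Pm i j)
    (hA : IsUnit (1 - Pm + Matrix.of fun _ s' => d s' : Matrix S S ℝ)) :
    ∀ i j, 1 ≤ mfptMatrix Pm d i j := by
  intro i j
  have hpass := fun i => mfpt_passage Pm d hd_pos hd_sum hstat hrow hA i j
  -- first: all entries of column j are nonnegative
  have hnonneg : ∀ i, 0 ≤ mfptMatrix Pm d i j := by
    obtain ⟨i₀, -, hmin⟩ := Finset.exists_min_image Finset.univ
      (fun i => mfptMatrix Pm d i j) ⟨i, Finset.mem_univ i⟩
    have hmin' : ∀ k, mfptMatrix Pm d i₀ j ≤ mfptMatrix Pm d k j :=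
      fun k => hmin k (Finset.mem_univ k)
    have h0 : 0 ≤ mfptMatrix Pm d i₀ j := by
      by_contra h
      push_neg at h
      have hcle : ∑ k ∈ Finset.univ.erase j, Pm i₀ k ≤ 1 := by
        have := Finset.sum_erase_add Finset.univ (fun k => Pm i₀ k) (Finset.mem_univ j)
        have := hPm_nonneg i₀ j
        rw [hrow i₀] at *
        linarith [Finset.sum_erase_add Finset.univ (fun k => Pm i₀ k) (Finset.mem_univ j),
          hPm_nonneg i₀ j, hrow i₀]
      have hcge : 0 ≤ ∑ k ∈ Finset.univ.erase j, Pm i₀ k :=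
        Finset.sum_nonneg fun k _ => hPm_nonneg i₀ k
      have hterm : (∑ k ∈ Finset.univ.erase j, Pm i₀ k) * mfptMatrix Pm d i₀ j
          ≤ ∑ k ∈ Finset.univ.erase j, Pm i₀ k * mfptMatrix Pm d k j := by
        rw [Finset.sum_mul]
        exact Finset.sum_le_sum fun k _ =>
          mul_le_mul_of_nonneg_left (hmin' k) (hPm_nonneg i₀ k)
      have hct : mfptMatrix Pm d i₀ j
          ≤ (∑ k ∈ Finset.univ.erase j, Pm i₀ k) * mfptMatrix Pm d i₀ j := by
        nlinarith
      have := hpass i₀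
      linarith
    intro k
    exact le_trans h0 (hmin' k)
  rw [hpass i]
  have : 0 ≤ ∑ k ∈ Finset.univ.erase j, Pm i k * mfptMatrix Pm d k j :=
    Finset.sum_nonneg fun k _ => mul_nonneg (hPm_nonneg i k) (hnonneg k)
  linarith

theorem stationary_distribution_tv_bound
    {S A : Type*} [Fintype S] [Fintype A] [DecidableEq S] [Nonempty S]
    (P : S → A → S → ℝ)
    (hP_nonneg : ∀ s a s', 0 ≤ P s a s') (hP_sum : ∀ s a, ∑ s', P s a s' = 1)
    (π π' : S → A → ℝ) (hπ : IsPolicy π) (hπ' : IsPolicy π')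
    (dπ dπ' : S → ℝ)
    (hd : IsStationaryDist P π dπ) (hd' : IsStationaryDist P π' dπ')
    -- fundamental matrices exist (irreducible aperiodic chains)
    (hZ : ∀ p d, IsPolicy p → IsStationaryDist P p d →
      IsUnit (1 - inducedMatrix P p + Matrix.of fun _ s' => d s' : Matrix S S ℝ))
    -- κ* = max_π κ^π where κ^π = Σ_{s'} d_π(s') M^π(s,s') (independent of s)
    (κstar : ℝ)
    (hκ_ub : ∀ p d, IsPolicy p → IsStationaryDist P p d →
      ∀ s, ∑ s', d s' * mfptMatrix (inducedMatrix P p) d s s' ≤ κstar)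
    (hκ_mem : ∃ p d, IsPolicy p ∧ IsStationaryDist P p d ∧
      ∀ s, ∑ s', d s' * mfptMatrix (inducedMatrix P p) d s s' = κstar) :
    (1 / 2) * ∑ s, |dπ' s - dπ s|
      ≤ (κstar - 1) * ∑ s, dπ s * ((1 / 2) * ∑ a, |π' s a - π s a|) := by
  classical
  obtain ⟨hπ_nn, hπ_sum⟩ := hπ
  obtain ⟨hπ'_nn, hπ'_sum⟩ := hπ'
  obtain ⟨hdpos, hdsum, hdstat⟩ := hd
  obtain ⟨hd'pos, hd'sum, hd'stat⟩ := hd'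
  -- general facts about induced matrices
  have hind_apply : ∀ (p : S → A → ℝ) s u, inducedMatrix P p s u = ∑ a, p s a * P s a u :=
    fun p s u => rfl
  have hind_row : ∀ (p : S → A → ℝ), (∀ s, ∑ a, p s a = 1) →
      ∀ s, ∑ u, inducedMatrix P p s u = 1 := by
    intro p hp s
    simp only [hind_apply]
    rw [Finset.sum_comm]
    have : ∀ a, ∑ u, p s a * P s a u = p s a := by
      intro a
      rw [← Finset.mul_sum, hP_sum s a, mul_one]
    rw [Finset.sum_congr rfl fun a _ => this a, hp s]
  have hind_nn : ∀ (p : S → A → ℝ), (∀ s a, 0 ≤ p s a) →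
      ∀ s u, 0 ≤ inducedMatrix P p s u := by
    intro p hp s u
    exact Finset.sum_nonneg fun a _ => mul_nonneg (hp s a) (hP_nonneg s a u)
  set Pm := inducedMatrix P π with hPmdef
  set Pm' := inducedMatrix P π' with hPm'def
  have hstatπ : ∀ j, ∑ s, dπ s * Pm s j = dπ j := hdstat
  have hstat' : ∀ j, ∑ s, dπ' s * Pm' s j = dπ' j := hd'stat
  have hA' : IsUnit (1 - Pm' + Matrix.of fun _ s' => dπ' s' : Matrix S S ℝ) :=
    hZ π' dπ' ⟨hπ'_nn, hπ'_sum⟩ ⟨hd'pos, hd'sum, hd'stat⟩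
  set Z' := fundMatrix Pm' dπ' with hZ'def
  set M' := mfptMatrix Pm' dπ' with hM'def
  have hM'ge1 : ∀ i j, 1 ≤ M' i j :=
    mfpt_ge_one Pm' dπ' hd'pos hd'sum hstat' (hind_row π' hπ'_sum) (hind_nn π' hπ'_nn) hA'
  set c : S → ℝ := fun u => ∑ s, dπ s * (Pm s u - Pm' s u) with hcdef
  -- the difference identity dπ - dπ' = c ᵥ* Z'
  have hdiff : ∀ j, dπ j - dπ' j = ∑ u, c u * Z' u j := by
    have hdet' : IsUnit ((1 - Pm' + Matrix.of fun _ s' => dπ' s' : Matrix S S ℝ)).det :=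
      (Matrix.isUnit_iff_isUnit_det _).mp hA'
    have hAZ' : (1 - Pm' + Matrix.of fun _ s' => dπ' s' : Matrix S S ℝ) * Z' = 1 :=
      Matrix.mul_nonsing_inv _ hdet'
    have hvA : Matrix.vecMul dπ (1 - Pm' + Matrix.of fun _ s' => dπ' s' : Matrix S S ℝ)
        = fun j => c j + dπ' j := by
      funext j
      simp only [Matrix.vecMul, dotProduct, Matrix.sub_apply, Matrix.add_apply,
        Matrix.one_apply, Matrix.of_apply]
      have expand : ∑ s, dπ s * ((if s = j then (1:ℝ) else 0) - Pm' s j + dπ' j)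
          = (∑ s, dπ s * (if s = j then (1:ℝ) else 0)) - (∑ s, dπ s * Pm' s j)
            + (∑ s, dπ s) * dπ' j := by
        simp only [mul_sub, mul_add]
        rw [Finset.sum_add_distrib, Finset.sum_sub_distrib, ← Finset.sum_mul]
      rw [expand, hdsum]
      have hcj : c j = dπ j - ∑ s, dπ s * Pm' s j := by
        simp only [hcdef, mul_sub]
        rw [Finset.sum_sub_distrib, hstatπ j]
      rw [hcj]
      simp [Finset.sum_ite_eq' Finset.univ j]
    have hkey : dπ = Matrix.vecMul (fun j => c j + dπ' j) Z' := by
      calc dπ = Matrix.vecMul dπ (1 : Matrix S S ℝ) := by simp [Matrix.vecMul_one]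
        _ = Matrix.vecMul dπ ((1 - Pm' + Matrix.of fun _ s' => dπ' s') * Z') := by rw [hAZ']
        _ = Matrix.vecMul (Matrix.vecMul dπ (1 - Pm' + Matrix.of fun _ s' => dπ' s')) Z' :=
            (Matrix.vecMul_vecMul dπ _ Z').symm
        _ = Matrix.vecMul (fun j => c j + dπ' j) Z' := by rw [hvA]
    have hd'Z : Matrix.vecMul dπ' Z' = dπ' := vec_fix_Z Pm' dπ' hd'sum hstat' hA'
    intro j
    have h1 : dπ j = ∑ u, (c u + dπ' u) * Z' u j := by
      have := congrFun hkey j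
      simpa [Matrix.vecMul, dotProduct] using this
    have h2 : ∑ u, (c u + dπ' u) * Z' u j
        = (∑ u, c u * Z' u j) + ∑ u, dπ' u * Z' u j := by
      rw [← Finset.sum_add_distrib]
      exact Finset.sum_congr rfl fun u _ => by ring
    have h3 : ∑ u, dπ' u * Z' u j = dπ' j := by
      have := congrFun hd'Z j
      simpa [Matrix.vecMul, dotProduct] using this
    rw [h1, h2, h3]
    ring
  have hcsum : ∑ u, c u = 0 := by
    simp only [hcdef]
    rw [Finset.sum_comm]
    have : ∀ s, ∑ u, dπ s * (Pm s u - Pm' s u) = 0 := by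
      intro s
      rw [← Finset.mul_sum, Finset.sum_sub_distrib, hind_row π hπ_sum s, hind_row π' hπ'_sum s]
      ring
    rw [Finset.sum_congr rfl fun s _ => this s]
    simp
  -- rewrite Z' in terms of M'
  have hZrw : ∀ u j, Z' u j = Z' j j + ((if u = j then (1:ℝ) else 0) - dπ' j * M' u j) := by
    intro u j
    have hm := mfpt_entry Pm' dπ' u j
    have hdj : dπ' j ≠ 0 := (hd'pos j).ne'
    rw [← hM'def, ← hZ'def] at hm
    rw [hm]
    field_simp
    ring
  have hdiff2 : ∀ j, dπ j - dπ' j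
      = ∑ u, c u * ((if u = j then (1:ℝ) else 0) - dπ' j * M' u j) := by
    intro j
    rw [hdiff j]
    have : ∀ u, c u * Z' u j
        = c u * Z' j j + c u * ((if u = j then (1:ℝ) else 0) - dπ' j * M' u j) := by
      intro u; rw [hZrw u j]; ring
    rw [Finset.sum_congr rfl fun u _ => this u, Finset.sum_add_distrib, ← Finset.sum_mul,
      hcsum]
    ring
  -- absolute value bound per coordinate
  have habs : ∀ j, |dπ' j - dπ j|
      ≤ ∑ u, |c u| * (dπ' j * M' u j - (if u = j then (1:ℝ) else 0)) := by
    intro j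
    rw [abs_sub_comm, hdiff2 j]
    calc |∑ u, c u * ((if u = j then (1:ℝ) else 0) - dπ' j * M' u j)|
        ≤ ∑ u, |c u * ((if u = j then (1:ℝ) else 0) - dπ' j * M' u j)| :=
          Finset.abs_sum_le_sum_abs _ _
      _ = ∑ u, |c u| * (dπ' j * M' u j - (if u = j then (1:ℝ) else 0)) := by
          refine Finset.sum_congr rfl fun u _ => ?_
          rw [abs_mul]
          congr 1
          rw [abs_sub_comm]
          refine abs_of_nonneg ?_
          by_cases h : u = j
          · subst h
            have : M' u u = (dπ' u)⁻¹ := by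
              rw [hM'def, mfpt_entry]; simp
            simp [this, mul_inv_cancel₀ (hd'pos u).ne']
          · simp only [h, if_neg h, if_false]
            have : 0 ≤ dπ' j * M' u j :=
              mul_nonneg (hd'pos j).le (le_trans zero_le_one (hM'ge1 u j))
            linarith
  -- sum over coordinates
  have hκ'ub : ∀ u, ∑ j, dπ' j * M' u j ≤ κstar := by
    intro u
    have := hκ_ub π' dπ' ⟨hπ'_nn, hπ'_sum⟩ ⟨hd'pos, hd'sum, hd'stat⟩ u
    simpa [hM'def, hPm'def] using this
  have hsumj : ∑ j, |dπ' j - dπ j| ≤ (κstar - 1) * ∑ u, |c u| := by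
    calc ∑ j, |dπ' j - dπ j|
        ≤ ∑ j, ∑ u, |c u| * (dπ' j * M' u j - (if u = j then (1:ℝ) else 0)) :=
          Finset.sum_le_sum fun j _ => habs j
      _ = ∑ u, |c u| * ((∑ j, dπ' j * M' u j) - 1) := by
          rw [Finset.sum_comm]
          refine Finset.sum_congr rfl fun u _ => ?_
          rw [← Finset.mul_sum]
          congr 1
          rw [Finset.sum_sub_distrib]
          congr 1
          simp
      _ ≤ ∑ u, |c u| * (κstar - 1) := by
          refine Finset.sum_le_sum fun u _ => ?_
          exact mul_le_mul_of_nonneg_left (by linarith [hκ'ub u]) (abs_nonneg _)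
      _ = (κstar - 1) * ∑ u, |c u| := by rw [← Finset.sum_mul]; ring
  -- bound on ∑ |c u|
  have hcb : ∑ u, |c u| ≤ ∑ s, dπ s * ∑ a, |π' s a - π s a| := by
    calc ∑ u, |c u| ≤ ∑ u, ∑ s, dπ s * |Pm s u - Pm' s u| := by
          refine Finset.sum_le_sum fun u _ => ?_
          calc |c u| ≤ ∑ s, |dπ s * (Pm s u - Pm' s u)| := Finset.abs_sum_le_sum_abs _ _
            _ = ∑ s, dπ s * |Pm s u - Pm' s u| := by
              refine Finset.sum_congr rfl fun s _ => ?_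
              rw [abs_mul, abs_of_nonneg (hdpos s).le]
      _ = ∑ s, dπ s * ∑ u, |Pm s u - Pm' s u| := by
          rw [Finset.sum_comm]
          exact Finset.sum_congr rfl fun s _ => (Finset.mul_sum _ _ _).symm
      _ ≤ ∑ s, dπ s * ∑ a, |π' s a - π s a| := by
          refine Finset.sum_le_sum fun s _ => ?_
          refine mul_le_mul_of_nonneg_left ?_ (hdpos s).le
          calc ∑ u, |Pm s u - Pm' s u|
              = ∑ u, |∑ a, (π s a - π' s a) * P s a u| := by
                refine Finset.sum_congr rfl fun u _ => ?_
                rw [hPmdef, hPm'def, hind_apply, hind_apply, ← Finset.sum_sub_distrib]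
                congr 1
                exact Finset.sum_congr rfl fun a _ => by ring
            _ ≤ ∑ u, ∑ a, |π' s a - π s a| * P s a u := by
                refine Finset.sum_le_sum fun u _ => ?_
                calc |∑ a, (π s a - π' s a) * P s a u|
                    ≤ ∑ a, |(π s a - π' s a) * P s a u| := Finset.abs_sum_le_sum_abs _ _
                  _ = ∑ a, |π' s a - π s a| * P s a u := by
                      refine Finset.sum_congr rfl fun a _ => ?_
                      rw [abs_mul, abs_of_nonneg (hP_nonneg s a u), abs_sub_comm]
            _ = ∑ a, |π' s a - π s a| := by
                rw [Finset.sum_comm]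
                refine Finset.sum_congr rfl fun a _ => ?_
                rw [← Finset.mul_sum, hP_sum s a, mul_one]
  -- κstar ≥ 1
  have hκ1 : 1 ≤ κstar := by
    obtain ⟨p, d0, hp, hds, heq⟩ := hκ_mem
    obtain ⟨hd0pos, hd0sum, hd0stat⟩ := hds
    have hge1 : ∀ i j, 1 ≤ mfptMatrix (inducedMatrix P p) d0 i j :=
      mfpt_ge_one _ _ hd0pos hd0sum hd0stat (hind_row p hp.2) (hind_nn p hp.1)
        (hZ p d0 hp ⟨hd0pos, hd0sum, hd0stat⟩)
    set s₀ : S := Classical.arbitrary S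
    have := heq s₀
    have hge : (1:ℝ) ≤ ∑ s', d0 s' * mfptMatrix (inducedMatrix P p) d0 s₀ s' := by
      calc (1:ℝ) = ∑ s', d0 s' := hd0sum.symm
        _ ≤ ∑ s', d0 s' * mfptMatrix (inducedMatrix P p) d0 s₀ s' := by
            refine Finset.sum_le_sum fun s' _ => ?_
            nlinarith [hge1 s₀ s', hd0pos s']
    linarith
  -- final assembly
  have hB : 0 ≤ ∑ s, dπ s * ∑ a, |π' s a - π s a| :=
    Finset.sum_nonneg fun s _ => mul_nonneg (hdpos s).le
      (Finset.sum_nonneg fun a _ => abs_nonneg _)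
  have hrhs : (κstar - 1) * ∑ s, dπ s * ((1 / 2) * ∑ a, |π' s a - π s a|)
      = (1/2) * ((κstar - 1) * ∑ s, dπ s * ∑ a, |π' s a - π s a|) := by
    have : ∑ s, dπ s * ((1 / 2) * ∑ a, |π' s a - π s a|)
        = (1/2) * ∑ s, dπ s * ∑ a, |π' s a - π s a| := by
      rw [Finset.mul_sum]
      exact Finset.sum_congr rfl fun s _ => by ring
    rw [this]
    ring
  rw [hrhs]
  have step1 : ∑ s, |dπ' s - dπ s| ≤ (κstar - 1) * ∑ s, dπ s * ∑ a, |π' s a - π s a| := by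
    calc ∑ s, |dπ' s - dπ s| ≤ (κstar - 1) * ∑ u, |c u| := hsumj
      _ ≤ (κstar - 1) * ∑ s, dπ s * ∑ a, |π' s a - π s a| :=
          mul_le_mul_of_nonneg_left hcb (by linarith)
  linarith
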